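/- Let k > 1 and let (v,u) ∈ A be an edge such that l_p ≥ 1 if v ∈ B and l_c ≥ 1 if v ∉ B. Then F_{k,1}^{vu} equals the union of (i) the sets ⋃_{v' ∈ B, u' ∈ V∖B, 1 ≤ l' ≤ l_p} F_{k−1,l'}^{v'u'} ⊎ {v,u} and (ii) the sets ⋃_{v' ∈ V∖B, 1 ≤ l' ≤ l_c} F_{k−1,l'}^{v'v'} ⊎ {v,u}. -/

import Mathlib

/-- An element of a path-cycle packing: a list of vertices together with a flag
telling whether it is a cycle (`true`) or a path (`false`). -/
structure PCElem (V : Type*) where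
  verts : List V
  isCycle : Bool

/-- A valid element w.r.t. the arc relation `A`: the vertices are distinct,
consecutive vertices are joined by arcs, there are at least two vertices
(so paths have length ≥ 1 and cycles have length ≥ 2), and for a cycle the
last vertex is joined back to the first. -/
def ValidElem {V : Type*} (A : V → V → Prop) (e : PCElem V) : Prop :=
  e.verts.Nodup ∧ e.verts.Chain' A ∧ 2 ≤ e.verts.length ∧
    (e.isCycle = true → ∀ h : e.verts ≠ [], A (e.verts.getLast h) (e.verts.head h))

/-- The length (number of arcs) of an element: a cycle on `k` vertices has length `k`,
a path on `k` vertices has length `k - 1`. -/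
def elemLen {V : Type*} (e : PCElem V) : ℕ :=
  if e.isCycle then e.verts.length else e.verts.length - 1

/-- The vertex set of an element. -/
def elemVerts {V : Type*} [DecidableEq V] (e : PCElem V) : Finset V :=
  e.verts.toFinset

/-- A path-cycle packing: a finite set of valid, pairwise vertex-disjoint
paths and cycles. -/
def IsPacking {V : Type*} [DecidableEq V] (A : V → V → Prop)
    (D : Finset (PCElem V)) : Prop :=
  (∀ e ∈ D, ValidElem A e) ∧
    (D : Set (PCElem V)).Pairwise fun e f => Disjoint (elemVerts e) (elemVerts f)

/-- `c(D)`: the total length of a packing. -/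
def packLen {V : Type*} (D : Finset (PCElem V)) : ℕ :=
  ∑ e ∈ D, elemLen e

/-- `V(D)`: the set of vertices appearing in a packing. -/
def packVerts {V : Type*} [DecidableEq V] (D : Finset (PCElem V)) : Finset V :=
  D.biUnion elemVerts

/-- A feasible path: starts at an altruistic vertex of `B` and has length at most `lp`. -/
def FeasPath {V : Type*} (B : Set V) (lp : ℕ) (e : PCElem V) : Prop :=
  e.isCycle = false ∧ (∃ b ∈ B, e.verts.head? = some b) ∧ e.verts.length - 1 ≤ lp

/-- A feasible cycle: contains no vertex of `B` and has length at most `lc`. -/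
def FeasCycle {V : Type*} (B : Set V) (lc : ℕ) (e : PCElem V) : Prop :=
  e.isCycle = true ∧ (∀ w ∈ e.verts, w ∉ B) ∧ e.verts.length ≤ lc

/-- A feasible element: a feasible path or a feasible cycle. -/
def FeasElem {V : Type*} (B : Set V) (lp lc : ℕ) (e : PCElem V) : Prop :=
  FeasPath B lp e ∨ FeasCycle B lc e

/-- A feasible path-cycle packing. -/
def FeasPacking {V : Type*} [DecidableEq V] (A : V → V → Prop) (B : Set V)
    (lp lc : ℕ) (D : Finset (PCElem V)) : Prop :=
  IsPacking A D ∧ ∀ e ∈ D, FeasElem B lp lc e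

/-- A semi-feasible element: a feasible path, a feasible cycle, or a path of
length at most `lc` containing no vertex of `B`. -/
def SemiElem {V : Type*} (B : Set V) (lp lc : ℕ) (e : PCElem V) : Prop :=
  FeasElem B lp lc e ∨
    (e.isCycle = false ∧ (∀ w ∈ e.verts, w ∉ B) ∧ e.verts.length - 1 ≤ lc)

/-- `e` is a `D_l^{vu}`: a path of length `l` from `v` to `u` when `v ≠ u`, and a
cycle of length `l` through `v` when `v = u`. -/
def IsDlvu {V : Type*} [DecidableEq V] (v u : V) (l : ℕ) (e : PCElem V) : Prop :=
  if v = u then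
    e.isCycle = true ∧ v ∈ e.verts ∧ e.verts.length = l
  else
    e.isCycle = false ∧ e.verts.head? = some v ∧ e.verts.getLast? = some u ∧
      e.verts.length = l + 1

/-- `F_{k,l}^{vu}`: the collection of vertex sets `V(D)` over all semi-feasible
packings `D = P ∪ C ∪ {D_l^{vu}}` with `c(D) = k`; the distinguished element
`D_l^{vu}` is semi-feasible and every other element is feasible. -/
def FF {V : Type*} [DecidableEq V] (A : V → V → Prop) (B : Set V) (lp lc : ℕ)
    (k l : ℕ) (v u : V) : Set (Finset V) :=
  { S | ∃ (D : Finset (PCElem V)) (e : PCElem V),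
      IsPacking A D ∧ e ∈ D ∧ IsDlvu v u l e ∧ SemiElem B lp lc e ∧
      (∀ f ∈ D, f ≠ e → FeasElem B lp lc f) ∧ packLen D = k ∧ packVerts D = S }

/-- `F ⊎ T = { X ∪ T : X ∈ F, X ∩ T = ∅ }` for a collection of finite sets. -/
def uplusS {V : Type*} [DecidableEq V] (F : Set (Finset V)) (T : Finset V) :
    Set (Finset V) :=
  { Z | ∃ X ∈ F, Disjoint X T ∧ Z = X ∪ T }


set_option linter.unusedSectionVars false

section Helpers
variable {V : Type*} [DecidableEq V]

lemma list_eq_pair {v u : V} {l : List V} (h1 : l.head? = some v)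
    (h2 : l.getLast? = some u) (h3 : l.length = 2) : l = [v, u] := by
  match l, h3 with
  | [a, b], _ =>
    simp [List.getLast?] at h1 h2
    simp [h1, h2]

lemma exists_pred_getLast {A : V → V → Prop} {l : List V} (hc : l.Chain' A)
    (hl : 2 ≤ l.length) (h : l ≠ []) : ∃ w, A w (l.getLast h) := by
  simp only [List.Chain'] at hc
  rw [List.isChain_iff_getElem] at hc
  have hi : l.length - 2 + 1 < l.length := by omega
  refine ⟨l[l.length - 2], ?_⟩
  rw [List.getLast_eq_getElem]
  have := hc (l.length - 2) hi
  convert this using 2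
  omega

lemma packVerts_erase [DecidableEq (PCElem V)] {A : V → V → Prop}
    {D : Finset (PCElem V)} {e : PCElem V}
    (hp : IsPacking A D) (he : e ∈ D) :
    packVerts (D.erase e) = packVerts D \ elemVerts e := by
  ext w
  simp only [packVerts, Finset.mem_biUnion, Finset.mem_erase, Finset.mem_sdiff]
  constructor
  · rintro ⟨f, ⟨hfe, hfD⟩, hw⟩
    refine ⟨⟨f, hfD, hw⟩, fun hwE => ?_⟩
    exact Finset.disjoint_left.1 (hp.2 hfD he hfe) hw hwE
  · rintro ⟨⟨f, hfD, hw⟩, hwE⟩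
    exact ⟨f, ⟨fun h => hwE (h ▸ hw), hfD⟩, hw⟩

end Helpers

section Main
variable {V : Type*} [DecidableEq V]

lemma mem_FF_insert [DecidableEq (PCElem V)] {A : V → V → Prop} {B : Set V}
    {lp lc k l' : ℕ} {v u v' u' : V} {X : Finset V}
    (hvu : A v u) (hvne : v ≠ u) (hk : 1 ≤ k)
    (hsemi0 : SemiElem B lp lc ⟨[v,u], false⟩)
    (hX : X ∈ FF A B lp lc (k-1) l' v' u')
    (hfeas' : ∀ f : PCElem V, IsDlvu v' u' l' f → SemiElem B lp lc f →
      FeasElem B lp lc f)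
    (hdisj : Disjoint X ({v,u} : Finset V)) :
    X ∪ {v,u} ∈ FF A B lp lc k 1 v u := by
  obtain ⟨D', f, hp', hfD', hdl, hsem, hoth, hlen', hV'⟩ := hX
  set e0 : PCElem V := ⟨[v,u], false⟩ with he0
  have he0verts : elemVerts e0 = {v,u} := by
    simp [elemVerts, e0, List.toFinset_cons]
  have he0notin : e0 ∉ D' := by
    intro h
    have hvin : v ∈ packVerts D' := Finset.mem_biUnion.2 ⟨e0, h, by
      rw [he0verts]; simp⟩
    rw [hV'] at hvin
    exact Finset.disjoint_left.1 hdisj hvin (by simp)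
  have hvalid0 : ValidElem A e0 := by
    refine ⟨by simp [e0, hvne], by simp [e0, List.Chain', List.isChain_pair, hvu], by simp [e0], ?_⟩
    intro h; simp [e0] at h
  have hdisjg : ∀ g ∈ D', Disjoint (elemVerts e0) (elemVerts g) := by
    intro g hg
    rw [he0verts]
    refine (Finset.disjoint_of_subset_right ?_ hdisj.symm)
    rw [← hV']
    exact fun w hw => Finset.mem_biUnion.2 ⟨g, hg, hw⟩
  refine ⟨insert e0 D', e0, ?_, Finset.mem_insert_self _ _, ?_, hsemi0, ?_, ?_, ?_⟩
  · constructor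
    · intro g hg
      rcases Finset.mem_insert.1 hg with rfl | hg
      · exact hvalid0
      · exact hp'.1 g hg
    · rw [Finset.coe_insert]
      rw [Set.pairwise_insert]
      exact ⟨hp'.2, fun g hg _ => ⟨hdisjg g hg, (hdisjg g hg).symm⟩⟩
  · rw [IsDlvu, if_neg hvne]
    refine ⟨rfl, rfl, rfl, rfl⟩
  · intro g hg hge
    rcases Finset.mem_insert.1 hg with rfl | hg'
    · exact absurd rfl hge
    · by_cases hgf : g = f
      · subst hgf; exact hfeas' g hdl hsem
      · exact hoth g hg' hgf
  · rw [packLen, Finset.sum_insert he0notin]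
    have : elemLen e0 = 1 := by simp [elemLen, e0]
    rw [this]
    rw [packLen] at hlen'
    omega
  · rw [packVerts, Finset.biUnion_insert, he0verts, ← packVerts, hV']
    exact Finset.union_comm _ _

end Main
/-- (Case (ii) of the DP recurrence) For `k > 1` and an arc `(v,u) ∈ A` with
`l_p ≥ 1` if `v ∈ B` and `l_c ≥ 1` if `v ∉ B`:
`F_{k,1}^{vu}` equals the union over feasible-path indices and feasible-cycle
indices of the corresponding families `⊎ {v,u}`. -/
theorem FF_recurrence_new_edge {V : Type*} [Fintype V] [DecidableEq V]
    (A : V → V → Prop) (B : Set V) (lp lc : ℕ)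
    (hloop : ∀ v, ¬ A v v) (hB : ∀ v u, A v u → u ∉ B)
    (k : ℕ) (v u : V) (hk : 1 < k) (hvu : A v u)
    (hvB : v ∈ B → 1 ≤ lp) (hvB' : v ∉ B → 1 ≤ lc) :
    FF A B lp lc k 1 v u =
      (⋃ (v' : V) (_ : v' ∈ B) (u' : V) (_ : u' ∉ B)
          (l' : ℕ) (_ : 1 ≤ l') (_ : l' ≤ lp),
        uplusS (FF A B lp lc (k - 1) l' v' u') {v, u}) ∪
      (⋃ (v' : V) (_ : v' ∉ B) (l' : ℕ) (_ : 1 ≤ l') (_ : l' ≤ lc),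
        uplusS (FF A B lp lc (k - 1) l' v' v') {v, u}) := by
  classical
  have hvne : v ≠ u := fun h => hloop v (h ▸ hvu)
  have huB : u ∉ B := hB v u hvu
  ext S
  constructor
  · rintro ⟨D, e, hpack, heD, hdlvu, hsemi, hfeas, hlen, rfl⟩
    rw [IsDlvu, if_neg hvne] at hdlvu
    obtain ⟨hec, hh, hl, hlen2⟩ := hdlvu
    have heverts : e.verts = [v, u] := list_eq_pair hh hl hlen2
    have hEverts : elemVerts e = {v, u} := by
      simp [elemVerts, heverts, List.toFinset_cons]
    have hsum : elemLen e + packLen (D.erase e) = packLen D :=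
      Finset.add_sum_erase D elemLen heD
    have helemlen : elemLen e = 1 := by simp [elemLen, hec, hlen2]
    have hplen' : packLen (D.erase e) = k - 1 := by omega
    have hne : (D.erase e).Nonempty := by
      by_contra hcon
      rw [Finset.not_nonempty_iff_eq_empty] at hcon
      rw [hcon] at hplen'
      simp [packLen] at hplen'
      omega
    obtain ⟨f, hf⟩ := hne
    have hfD : f ∈ D := Finset.mem_of_mem_erase hf
    have hfe : f ≠ e := Finset.ne_of_mem_erase hf
    have hffeas := hfeas f hfD hfe
    obtain ⟨hnd, hch, hlen2f, hcyc⟩ := hpack.1 f hfD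
    have hfne : f.verts ≠ [] := by
      intro h; rw [h] at hlen2f; simp at hlen2f
    have hpack' : IsPacking A (D.erase e) :=
      ⟨fun g hg => hpack.1 g (Finset.mem_of_mem_erase hg),
       hpack.2.mono (Finset.coe_subset.2 (Finset.erase_subset _ _))⟩
    have hXeq : packVerts (D.erase e) = packVerts D \ {v, u} := by
      rw [packVerts_erase hpack heD, hEverts]
    have hsub : ({v, u} : Finset V) ⊆ packVerts D := by
      rw [← hEverts]
      exact fun w hw => Finset.mem_biUnion.2 ⟨e, heD, hw⟩
    have hdisjX : Disjoint (packVerts (D.erase e)) ({v, u} : Finset V) := by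
      rw [hXeq]; exact Finset.sdiff_disjoint
    have hSX : packVerts D = packVerts (D.erase e) ∪ {v, u} := by
      rw [hXeq, Finset.sdiff_union_of_subset hsub]
    have hsemf : SemiElem B lp lc f := Or.inl hffeas
    have hothers : ∀ g ∈ D.erase e, g ≠ f → FeasElem B lp lc g := fun g hg _ =>
      hfeas g (Finset.mem_of_mem_erase hg) (Finset.ne_of_mem_erase hg)
    rcases hffeas with ⟨hfc, ⟨b, hbB, hhead⟩, hlp⟩ | ⟨hfc, hnB, hlc⟩
    · -- f is a feasible path
      obtain ⟨w, hw⟩ := exists_pred_getLast hch hlen2f hfne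
      have hu'B : f.verts.getLast hfne ∉ B := hB w _ hw
      have hbne : b ≠ f.verts.getLast hfne := fun h => hu'B (h ▸ hbB)
      left
      simp only [Set.mem_iUnion]
      refine ⟨b, hbB, f.verts.getLast hfne, hu'B, f.verts.length - 1,
        by omega, hlp, packVerts (D.erase e), ?_, hdisjX, hSX⟩
      refine ⟨D.erase e, f, hpack', hf, ?_, hsemf, hothers, hplen', rfl⟩
      rw [IsDlvu, if_neg hbne]
      exact ⟨hfc, hhead, List.getLast?_eq_getLast hfne, by omega⟩
    · -- f is a feasible cycle
      right
      simp only [Set.mem_iUnion]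
      refine ⟨f.verts.head hfne, hnB _ (List.head_mem hfne), f.verts.length,
        by omega, hlc, packVerts (D.erase e), ?_, hdisjX, hSX⟩
      refine ⟨D.erase e, f, hpack', hf, ?_, hsemf, hothers, hplen', rfl⟩
      rw [IsDlvu, if_pos rfl]
      exact ⟨hfc, List.head_mem hfne, rfl⟩
  · intro hS
    have hsemi0 : SemiElem B lp lc ⟨[v,u], false⟩ := by
      by_cases hv : v ∈ B
      · exact Or.inl (Or.inl ⟨rfl, ⟨v, hv, rfl⟩, by simpa using hvB hv⟩)
      · refine Or.inr ⟨rfl, ?_, by simpa using hvB' hv⟩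
        intro w hw
        rcases List.mem_pair.1 hw with rfl | rfl
        · exact hv
        · exact huB
    rcases hS with h | h
    · simp only [Set.mem_iUnion] at h
      obtain ⟨v', hv'B, u', hu'B, l', hl1, hl2, X, hX, hdisj, rfl⟩ := h
      have hv'ne : v' ≠ u' := fun h => hu'B (h ▸ hv'B)
      refine mem_FF_insert hvu hvne (by omega) hsemi0 hX ?_ hdisj
      rintro f hdl (hfe | ⟨_, hnB, _⟩)
      · exact hfe
      · rw [IsDlvu, if_neg hv'ne] at hdl
        exact absurd hv'B (hnB v' (List.mem_of_mem_head? (hdl.2.1 ▸ rfl)))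
    · simp only [Set.mem_iUnion] at h
      obtain ⟨v', hv'B, l', hl1, hl2, X, hX, hdisj, rfl⟩ := h
      refine mem_FF_insert hvu hvne (by omega) hsemi0 hX ?_ hdisj
      rintro f hdl (hfe | ⟨hc, _, _⟩)
      · exact hfe
      · rw [IsDlvu, if_pos rfl] at hdl
        rw [hdl.1] at hc
        simp at hc
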